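/- Two-sided bound on the factorial hitting-probability sum: Let R, j, m be natural numbers with j ≥ 1 and j + m ≤ R − 1, and define S' = Σ_{i=0}^{m} (R − j − i)! · R^i / (R − j)!. Then ((R−j)/j) · ((1 + j/(R−j))^{m+1} − 1) ≤ S' ≤ ((R−j−m)/(j+m)) · (e^{(j+m)(m+1)/(R−j−m)} − 1), and moreover S' ≤ (m+1) · e^{(j+m)(m+1)/(R−j−m)}. -/

import Mathlib

/-- Two-sided bound on the factorial hitting-probability sum
`S' = Σ_{i=0}^{m} (R−j−i)!·R^i/(R−j)!`, for naturals `R, j, m` with `j ≥ 1`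
and `j + m ≤ R − 1`:
`((R−j)/j)((1+j/(R−j))^{m+1} − 1) ≤ S' ≤ ((R−j−m)/(j+m))(e^{(j+m)(m+1)/(R−j−m)} − 1)`,
and moreover `S' ≤ (m+1)·e^{(j+m)(m+1)/(R−j−m)}`. -/
theorem factorial_hitting_probability_sum_bounds
    (R j m : ℕ) (hj : 1 ≤ j) (hjm : j + m ≤ R - 1) :
    (((R : ℝ) - j) / j) * ((1 + (j : ℝ) / ((R : ℝ) - j)) ^ (m + 1) - 1)
        ≤ (∑ i ∈ Finset.range (m + 1),
            (Nat.factorial (R - j - i) : ℝ) * (R : ℝ) ^ i / Nat.factorial (R - j))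
      ∧ (∑ i ∈ Finset.range (m + 1),
            (Nat.factorial (R - j - i) : ℝ) * (R : ℝ) ^ i / Nat.factorial (R - j))
        ≤ (((R : ℝ) - j - m) / ((j : ℝ) + m))
            * (Real.exp (((j : ℝ) + m) * (m + 1) / ((R : ℝ) - j - m)) - 1)
      ∧ (∑ i ∈ Finset.range (m + 1),
            (Nat.factorial (R - j - i) : ℝ) * (R : ℝ) ^ i / Nat.factorial (R - j))
        ≤ ((m : ℝ) + 1) * Real.exp (((j : ℝ) + m) * (m + 1) / ((R : ℝ) - j - m)) := by
  have hR2 : 2 ≤ R := by omega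
  set n : ℕ := R - j with hn
  have hmn : m + 1 ≤ n := by omega
  have hcast : ((R:ℝ) - j) = (n : ℝ) := by
    rw [hn]; rw [Nat.cast_sub (by omega)]
  have hRcast : (R:ℝ) = (n:ℝ) + j := by
    have : R = n + j := by omega
    exact_mod_cast this
  have hnpos : (0:ℝ) < (n:ℝ) := by
    have : 1 ≤ n := by omega
    exact_mod_cast Nat.pos_of_ne_zero (by omega)
  have hm_lt : ((m:ℝ) + 1) ≤ (n:ℝ) := by exact_mod_cast hmn
  have hnmpos : (0:ℝ) < (n:ℝ) - m := by linarith
  have hj1 : (1:ℝ) ≤ (j:ℝ) := by exact_mod_cast hj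
  have hjm0 : (0:ℝ) < (j:ℝ) + m := by positivity
  have hRpos : (0:ℝ) < (R:ℝ) := by rw [hRcast]; linarith
  have hnm : ((R:ℝ) - j - m) = (n:ℝ) - m := by rw [hcast]
  -- key termwise bounds
  have key : ∀ i, i ≤ m →
      ((R:ℝ)/(n:ℝ))^i ≤ (Nat.factorial (n - i) : ℝ) * (R:ℝ)^i / Nat.factorial n
      ∧ (Nat.factorial (n - i) : ℝ) * (R:ℝ)^i / Nat.factorial n
        ≤ ((R:ℝ)/((n:ℝ)-m))^i := by
    intro i
    induction i with
    | zero => intro _; simp [div_self (show (Nat.factorial n:ℝ) ≠ 0 by positivity)]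
    | succ i ih =>
      intro hi
      obtain ⟨h1, h2⟩ := ih (by omega)
      have him : (i:ℝ) ≤ (m:ℝ) := by exact_mod_cast (by omega : i ≤ m)
      have hnipos : (0:ℝ) < (n:ℝ) - i := by linarith
      have hf : (0:ℝ) < (Nat.factorial n : ℝ) := by
        exact_mod_cast Nat.factorial_pos n
      have e3 : ((n - (i+1) : ℕ) : ℝ) = (n:ℝ) - i - 1 := by
        rw [Nat.cast_sub (by omega)]; push_cast; ring
      have e2 : (Nat.factorial (n - i) : ℝ)
          = ((n:ℝ) - i) * Nat.factorial (n - (i+1)) := by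
        have e1 : n - i = (n - (i+1)) + 1 := by omega
        rw [e1, Nat.factorial_succ]
        push_cast
        rw [e3]; ring
      have hrec : (Nat.factorial (n - (i+1)) : ℝ) * (R:ℝ)^(i+1) / Nat.factorial n
          = ((Nat.factorial (n - i) : ℝ) * (R:ℝ)^i / Nat.factorial n)
            * ((R:ℝ) / ((n:ℝ) - i)) := by
        rw [e2]
        field_simp
        ring
      have hai_nonneg : (0:ℝ) ≤ (Nat.factorial (n - i) : ℝ) * (R:ℝ)^i / Nat.factorial n := by
        positivity
      have hq_le : (R:ℝ)/(n:ℝ) ≤ (R:ℝ)/((n:ℝ)-(i:ℝ)) := by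
        apply div_le_div_of_nonneg_left (le_of_lt hRpos) hnipos (by linarith)
      have hr_ge : (R:ℝ)/((n:ℝ)-i) ≤ (R:ℝ)/((n:ℝ)-m) := by
        apply div_le_div_of_nonneg_left (le_of_lt hRpos) hnmpos (by linarith)
      constructor
      · calc ((R:ℝ)/(n:ℝ))^(i+1) = ((R:ℝ)/(n:ℝ))^i * ((R:ℝ)/(n:ℝ)) := pow_succ _ _
          _ ≤ ((Nat.factorial (n - i) : ℝ) * (R:ℝ)^i / Nat.factorial n)
              * ((R:ℝ) / ((n:ℝ) - i)) := by
              apply mul_le_mul h1 hq_le (by positivity) hai_nonneg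
          _ = _ := hrec.symm
      · calc (Nat.factorial (n - (i+1)) : ℝ) * (R:ℝ)^(i+1) / Nat.factorial n
            = ((Nat.factorial (n - i) : ℝ) * (R:ℝ)^i / Nat.factorial n)
              * ((R:ℝ) / ((n:ℝ) - i)) := hrec
          _ ≤ ((R:ℝ)/((n:ℝ)-m))^i * ((R:ℝ)/((n:ℝ)-m)) := by
              apply mul_le_mul h2 hr_ge (by positivity) (by positivity)
          _ = ((R:ℝ)/((n:ℝ)-m))^(i+1) := (pow_succ _ _).symm
  -- abbreviations
  set q : ℝ := (R:ℝ)/(n:ℝ) with hqdef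
  set r : ℝ := (R:ℝ)/((n:ℝ)-m) with hrdef
  have hq1 : 1 < q := by
    rw [hqdef, lt_div_iff₀ hnpos]; rw [hRcast]; linarith
  have hr1 : 1 < r := by
    rw [hrdef, lt_div_iff₀ hnmpos]; rw [hRcast]; push_cast; nlinarith [Nat.cast_nonneg (α := ℝ) m]
  -- lower bound
  have hlow : (((R : ℝ) - j) / j) * ((1 + (j : ℝ) / ((R : ℝ) - j)) ^ (m + 1) - 1)
      = (q^(m+1) - 1)/(q - 1) := by
    rw [hcast, hqdef, hRcast]
    have hj0 : (j:ℝ) ≠ 0 := by linarith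
    have hn0 : (n:ℝ) ≠ 0 := ne_of_gt hnpos
    rw [add_div, div_self hn0, add_sub_cancel_left, div_div_eq_mul_div]; ring
  have lower : (((R : ℝ) - j) / j) * ((1 + (j : ℝ) / ((R : ℝ) - j)) ^ (m + 1) - 1)
      ≤ ∑ i ∈ Finset.range (m + 1),
          (Nat.factorial (n - i) : ℝ) * (R : ℝ) ^ i / Nat.factorial n := by
    rw [hlow, ← geom_sum_eq (ne_of_gt hq1)]
    apply Finset.sum_le_sum
    intro i hi
    exact (key i (Nat.lt_succ_iff.mp (Finset.mem_range.mp hi))).1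
  -- upper via geometric sum in r
  have hrsum : (∑ i ∈ Finset.range (m + 1),
      (Nat.factorial (n - i) : ℝ) * (R : ℝ) ^ i / Nat.factorial n)
      ≤ (r^(m+1) - 1)/(r - 1) := by
    rw [← geom_sum_eq (ne_of_gt hr1)]
    apply Finset.sum_le_sum
    intro i hi
    exact (key i (Nat.lt_succ_iff.mp (Finset.mem_range.mp hi))).2
  set x : ℝ := ((j:ℝ) + m)/((n:ℝ) - m) with hxdef
  have hx0 : 0 ≤ x := le_of_lt (div_pos hjm0 hnmpos)
  have hrx : r = 1 + x := by
    rw [hrdef, hxdef, hRcast]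
    field_simp
    ring
  set y : ℝ := ((j : ℝ) + m) * (m + 1) / ((n:ℝ) - m) with hydef
  have hy_eq : y = ((m:ℝ)+1) * x := by rw [hydef, hxdef]; ring
  have hy0 : 0 ≤ y := by rw [hy_eq]; positivity
  have hrexp : r^(m+1) ≤ Real.exp y := by
    have h1 : r ≤ Real.exp x := by rw [hrx]; linarith [Real.add_one_le_exp x]
    have h2 : r^(m+1) ≤ (Real.exp x)^(m+1) :=
      pow_le_pow_left₀ (by linarith) h1 (m+1)
    have h3 : (Real.exp x)^(m+1) = Real.exp y := by
      rw [← Real.exp_nat_mul, hy_eq]; push_cast; ring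
    linarith [h2, h3.le, h3.ge]
  have hgeom_eq : (r^(m+1) - 1)/(r - 1) = (((n:ℝ) - m)/((j:ℝ) + m)) * (r^(m+1) - 1) := by
    have h : r - 1 = x := by rw [hrx]; ring
    rw [h, hxdef, div_div_eq_mul_div]
    ring
  have upper : (∑ i ∈ Finset.range (m + 1),
      (Nat.factorial (n - i) : ℝ) * (R : ℝ) ^ i / Nat.factorial n)
      ≤ (((n:ℝ) - m)/((j:ℝ) + m)) * (Real.exp y - 1) := by
    refine le_trans hrsum ?_
    rw [hgeom_eq]
    apply mul_le_mul_of_nonneg_left (by linarith) (le_of_lt (div_pos hnmpos hjm0))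
  have hE1 : Real.exp y - 1 ≤ y * Real.exp y := by
    have h := Real.add_one_le_exp (-y)
    have h2 : Real.exp (-y) = (Real.exp y)⁻¹ := Real.exp_neg y
    rw [h2] at h
    have h3 : (-y + 1) * Real.exp y ≤ 1 := by
      have h4 := mul_le_mul_of_nonneg_right h (Real.exp_pos y).le
      rwa [inv_mul_cancel₀ (ne_of_gt (Real.exp_pos y))] at h4
    nlinarith [h3]
  have hcoef : (((n:ℝ) - m)/((j:ℝ) + m)) * y = (m:ℝ) + 1 := by
    rw [hydef]
    field_simp
  have third : (∑ i ∈ Finset.range (m + 1),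
      (Nat.factorial (n - i) : ℝ) * (R : ℝ) ^ i / Nat.factorial n)
      ≤ ((m:ℝ) + 1) * Real.exp y := by
    refine le_trans upper ?_
    calc (((n:ℝ) - m)/((j:ℝ) + m)) * (Real.exp y - 1)
        ≤ (((n:ℝ) - m)/((j:ℝ) + m)) * (y * Real.exp y) :=
          mul_le_mul_of_nonneg_left hE1 (le_of_lt (div_pos hnmpos hjm0))
      _ = ((m:ℝ) + 1) * Real.exp y := by rw [← mul_assoc, hcoef]
  refine ⟨lower, ?_, ?_⟩
  · rw [hnm, ← hydef]
    exact upper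
  · rw [hnm, ← hydef]
    exact third
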